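/- Let r, s be integers with 1 ≤ r < s and s − r not divisible by 3; put r̂ = 2r+s, ŝ = r+2s, and let Ĥ = {3i + r̂ : i ∈ ℕ₀} ∪ {3i + ŝ : i ∈ ℕ₀} ∪ {3i + 3(r+s) : i ∈ ℕ₀}. Then the number of elements of Ĥ that are strictly less than 3(r+s) equals r + s + 1, and 3(r+s) is the smallest element of Ĥ divisible by 3. -/
import Mathlib


/-- With `r̂ = 2r+s`, `ŝ = r+2s`,
`Ĥ = {3i+r̂} ∪ {3i+ŝ} ∪ {3i+3(r+s)}`: the number of elements of `Ĥ` strictly less than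
`3(r+s)` equals `r+s+1`, and `3(r+s)` is the smallest element of `Ĥ` divisible by 3. -/
theorem stmt8 (r s : ℕ) (hr : 1 ≤ r) (hrs : r < s) (h3 : ¬ (3 ∣ (s - r)))
    (rh sh : ℕ) (Hhat : Set ℕ)
    (hrh : rh = 2*r + s) (hsh : sh = r + 2*s)
    (hH : Hhat = {n | ∃ i, n = 3*i + rh} ∪ {n | ∃ i, n = 3*i + sh}
                  ∪ {n | ∃ i, n = 3*i + 3*(r+s)}) :
    {n | n ∈ Hhat ∧ n < 3*(r+s)}.ncard = r + s + 1 ∧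
    IsLeast {n | n ∈ Hhat ∧ 3 ∣ n} (3*(r+s)) := by
  subst hrh hsh hH
  have hm1 : (2*r+s) % 3 ≠ 0 := by omega
  have hm2 : (r+2*s) % 3 ≠ 0 := by omega
  have hm3 : (2*r+s) % 3 + (r+2*s) % 3 = 3 := by omega
  constructor
  · have hset : {n | n ∈ ({n | ∃ i, n = 3*i + (2*r+s)} ∪ {n | ∃ i, n = 3*i + (r+2*s)}
                  ∪ {n | ∃ i, n = 3*i + 3*(r+s)} : Set ℕ) ∧ n < 3*(r+s)} =
        ↑(((Finset.range ((r+2*s)/3+1)).image (fun i => 3*i + (2*r+s))) ∪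
          ((Finset.range ((2*r+s)/3+1)).image (fun i => 3*i + (r+2*s)))) := by
      ext n
      simp only [Set.mem_setOf_eq, Set.mem_union, Finset.coe_union, Finset.coe_image,
        Finset.coe_range, Set.mem_image, Set.mem_Iio]
      constructor
      · rintro ⟨(⟨i, rfl⟩ | ⟨i, rfl⟩) | ⟨i, rfl⟩, hlt⟩
        · exact Or.inl ⟨i, by omega, rfl⟩
        · exact Or.inr ⟨i, by omega, rfl⟩
        · omega
      · rintro (⟨i, hi, rfl⟩ | ⟨i, hi, rfl⟩)
        · exact ⟨Or.inl (Or.inl ⟨i, rfl⟩), by omega⟩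
        · exact ⟨Or.inl (Or.inr ⟨i, rfl⟩), by omega⟩
    rw [hset, Set.ncard_coe_finset]
    rw [Finset.card_union_of_disjoint, Finset.card_image_of_injective _ (by intro a b h; simp only [] at h; omega),
      Finset.card_image_of_injective _ (by intro a b h; simp only [] at h; omega),
      Finset.card_range, Finset.card_range]
    · omega
    · rw [Finset.disjoint_left]
      rintro n hn hn'
      simp only [Finset.mem_image, Finset.mem_range] at hn hn'
      obtain ⟨i, hi, rfl⟩ := hn
      obtain ⟨j, hj, hj'⟩ := hn'
      omega
  · constructor
    · exact ⟨Or.inr ⟨0, by ring⟩, ⟨r+s, rfl⟩⟩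
    · rintro n ⟨((⟨i, rfl⟩ | ⟨i, rfl⟩) | ⟨i, rfl⟩), hdvd⟩ <;> omega
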